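/- If ν is a distribution over linear orders on X and π is in the support of ν (ν(π) > 0), then the path associated with π on the probability flow diagram of the induced system of choice probabilities is supported, i.e., every Block–Marschak polynomial along that path is strictly positive. -/
import Mathlib


open Finset
open scoped Classical

/-- A linear order on a finite set `α`, encoded as a ranking bijection to `Fin (card α)`;
higher value means more preferred. -/
abbrev RankOrd (α : Type*) [Fintype α] := α ≃ Fin (Fintype.card α)

variable {α : Type*} [Fintype α] [DecidableEq α]

/-- `ν` is a probability distribution over linear orders. -/
def IsDist [Fintype α] (ν : RankOrd α → ℝ) : Prop :=
  (∀ π, 0 ≤ ν π) ∧ ∑ π : RankOrd α, ν π = 1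

/-- The choice probabilities induced by a distribution over linear orders. -/
noncomputable def choiceProb (ν : RankOrd α → ℝ) (A : Finset α) (x : α) : ℝ :=
  ∑ π : RankOrd α, if ∀ y ∈ A, y ≠ x → (π y : ℕ) < (π x : ℕ) then ν π else 0

/-- `ν` rationalizes the system of choice probabilities `P`. -/
def Rationalizes (ν : RankOrd α → ℝ) (P : Finset α → α → ℝ) : Prop :=
  IsDist ν ∧ ∀ A : Finset α, A.Nonempty → ∀ x ∈ A, P A x = choiceProb ν A x

/-- The Block–Marschak polynomial `q(x,A)` of a system of choice probabilities `P`. -/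
noncomputable def bm (P : Finset α → α → ℝ) (x : α) (A : Finset α) : ℝ :=
  ∑ A' ∈ Finset.univ.powerset.filter (fun A' => A ⊆ A'),
    (-1 : ℝ) ^ (A' \ A).card * P A' x

/-- A path: a maximal chain `X = A_0 ⊋ A_1 ⊋ ⋯ ⊋ A_{|X|} = ∅` decreasing by one element. -/
def IsPath (ρ : ℕ → Finset α) : Prop :=
  ρ 0 = Finset.univ ∧ ρ (Fintype.card α) = ∅ ∧
    ∀ i < Fintype.card α, ρ (i + 1) ⊆ ρ i ∧ (ρ i \ ρ (i + 1)).card = 1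

/-- A supported path: all Block–Marschak edge weights along it are strictly positive. -/
def SupportedPath (P : Finset α → α → ℝ) (ρ : ℕ → Finset α) : Prop :=
  IsPath ρ ∧ ∀ i < Fintype.card α, ∀ x ∈ ρ i \ ρ (i + 1), 0 < bm P x (ρ i)

/-- Two paths are branching: they agree on a consecutive block of nodes
`{i,…,j} ⊆ {1,…,|X|-1}` while differing at positions `i-1` and `j+1`. -/
def BranchingPair (ρ ρ' : ℕ → Finset α) : Prop :=
  ∃ i j, 1 ≤ i ∧ i ≤ j ∧ j ≤ Fintype.card α - 1 ∧
    ρ (i - 1) ≠ ρ' (i - 1) ∧ ρ (j + 1) ≠ ρ' (j + 1) ∧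
    ∀ m, i ≤ m → m ≤ j → ρ m = ρ' m

/-- The path associated with the linear order `π`: `A_i` is `X` minus the top `i` elements. -/
def pathOf (π : RankOrd α) : ℕ → Finset α :=
  fun i => Finset.univ.filter (fun w => (π w : ℕ) < Fintype.card α - i)

/-- The weak upper contour set of `x` according to `π`. -/
def upper (π : RankOrd α) (x : α) : Finset α :=
  Finset.univ.filter (fun w => (π x : ℕ) ≤ (π w : ℕ))

/-- `π ∈ M_{x,A}`: `π` ranks `X \ A` above `x` and `x` above `A \ {x}`. -/
def inM (π : RankOrd α) (x : α) (A : Finset α) : Prop :=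
  (∀ z, z ∉ A → (π x : ℕ) < (π z : ℕ)) ∧ ∀ y ∈ A, y ≠ x → (π y : ℕ) < (π x : ℕ)

lemma bmInnerSum (π' : RankOrd α) (x : α) (A : Finset α) (hx : x ∈ A) (c : ℝ) :
    ∑ A' ∈ Finset.univ.powerset.filter (fun A' => A ⊆ A'),
      (-1:ℝ)^(A' \ A).card * (if ∀ y ∈ A', y ≠ x → (π' y : ℕ) < (π' x : ℕ) then c else 0)
    = if inM π' x A then c else 0 := by
  set B : Finset α := (Finset.univ \ A).filter (fun z => (π' z : ℕ) < (π' x : ℕ)) with hB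
  have key : ∑ S ∈ (Finset.univ \ A).powerset,
      (-1:ℝ)^S.card * (if ∀ y ∈ A ∪ S, y ≠ x → (π' y : ℕ) < (π' x : ℕ) then c else 0)
      = ∑ A' ∈ Finset.univ.powerset.filter (fun A' => A ⊆ A'),
      (-1:ℝ)^(A' \ A).card * (if ∀ y ∈ A', y ≠ x → (π' y : ℕ) < (π' x : ℕ) then c else 0) := by
    refine Finset.sum_nbij' (fun S => A ∪ S) (fun A' => A' \ A) ?_ ?_ ?_ ?_ ?_
    · intro S hS
      simp only [mem_powerset, mem_filter, mem_sdiff] at *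
      exact ⟨subset_univ _, subset_union_left⟩
    · intro A' hA'
      simp only [mem_powerset, mem_filter] at *
      intro z hz
      simp only [mem_sdiff] at hz ⊢
      exact ⟨mem_univ _, hz.2⟩
    · intro S hS
      simp only [mem_powerset] at hS
      show (A ∪ S) \ A = S
      rw [Finset.union_sdiff_cancel_left]
      rw [Finset.disjoint_left]
      intro a ha haS
      exact ((mem_sdiff.mp (hS haS)).2 ha).elim
    · intro A' hA'
      simp only [mem_powerset, mem_filter] at hA'
      exact Finset.union_sdiff_of_subset hA'.2
    · intro S hS
      simp only [mem_powerset] at hS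
      congr 2
      rw [Finset.union_sdiff_cancel_left]
      rw [Finset.disjoint_left]
      intro a ha haS
      exact ((mem_sdiff.mp (hS haS)).2 ha).elim
  rw [← key]
  by_cases hA : ∀ y ∈ A, y ≠ x → (π' y : ℕ) < (π' x : ℕ)
  · have hterm : ∀ S ∈ (Finset.univ \ A).powerset,
        (-1:ℝ)^S.card * (if ∀ y ∈ A ∪ S, y ≠ x → (π' y : ℕ) < (π' x : ℕ) then c else 0)
        = (-1:ℝ)^S.card * (if S ⊆ B then c else 0) := by
      intro S hS
      simp only [mem_powerset] at hS
      congr 1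
      have : (∀ y ∈ A ∪ S, y ≠ x → (π' y : ℕ) < (π' x : ℕ)) ↔ S ⊆ B := by
        constructor
        · intro h z hz
          have hzA : z ∉ A := (mem_sdiff.mp (hS hz)).2
          refine mem_filter.mpr ⟨mem_sdiff.mpr ⟨mem_univ _, hzA⟩, ?_⟩
          exact h z (mem_union_right _ hz) (fun hzx => hzA (hzx ▸ hx))
        · intro h y hy hyx
          rcases mem_union.mp hy with h1 | h1
          · exact hA y h1 hyx
          · exact (mem_filter.mp (h h1)).2
      exact if_congr this rfl rfl
    rw [Finset.sum_congr rfl hterm]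
    have hBsub : B.powerset ⊆ (Finset.univ \ A).powerset :=
      Finset.powerset_mono.mpr (Finset.filter_subset _ _)
    rw [← Finset.sum_subset hBsub (by
      intro S hS hSB
      simp only [mem_powerset] at hSB
      simp [hSB])]
    have : ∀ S ∈ B.powerset, (-1:ℝ)^S.card * (if S ⊆ B then c else 0) = (-1:ℝ)^S.card * c := by
        intro S hS; simp [mem_powerset.mp hS]
    have hpow : (∑ i ∈ B.powerset, (-1:ℝ)^i.card) = if B = ∅ then (1:ℝ) else 0 := by
      have h := @Finset.sum_powerset_neg_one_pow_card α _ B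
      have := congrArg (fun z : ℤ => (z : ℝ)) h
      push_cast at this
      simpa using this
    rw [Finset.sum_congr rfl this, ← Finset.sum_mul, hpow]
    have hM : inM π' x A ↔ B = ∅ := by
        constructor
        · intro hm
          rw [Finset.eq_empty_iff_forall_notMem]
          intro z hz
          simp only [hB, mem_filter, mem_sdiff] at hz
          exact absurd hz.2 (not_lt.mpr (le_of_lt (hm.1 z hz.1.2)))
        · intro hBe
          refine ⟨fun z hz => ?_, hA⟩
          have : z ∉ B := by rw [hBe]; exact notMem_empty z
          simp only [hB, mem_filter, mem_sdiff, mem_univ, true_and] at this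
          have h2 : ¬ (π' z : ℕ) < (π' x : ℕ) := fun hlt => this ⟨hz, hlt⟩
          rcases lt_or_eq_of_le (not_lt.mp h2) with h3 | h3
          · exact h3
          · exact absurd (π'.injective (Fin.ext h3)) (fun he => hz (he ▸ hx))
    by_cases hBe : B = ∅
    · rw [if_pos hBe, if_pos (hM.mpr hBe), one_mul]
    · rw [if_neg hBe, if_neg (fun h => hBe (hM.mp h)), zero_mul]
  · have : ∀ S ∈ (Finset.univ \ A).powerset,
        (-1:ℝ)^S.card * (if ∀ y ∈ A ∪ S, y ≠ x → (π' y : ℕ) < (π' x : ℕ) then c else 0) = 0 := by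
      intro S hS
      have : ¬ ∀ y ∈ A ∪ S, y ≠ x → (π' y : ℕ) < (π' x : ℕ) := by
        intro h; exact hA (fun y hy => h y (mem_union_left _ hy))
      rw [if_neg this, mul_zero]
    rw [Finset.sum_congr rfl this]
    have : ¬ inM π' x A := fun hm => hA hm.2
    simp [this]

lemma bm_eq (ν : RankOrd α → ℝ) (x : α) (A : Finset α) (hx : x ∈ A) :
    bm (choiceProb ν) x A = ∑ π' : RankOrd α, if inM π' x A then ν π' else 0 := by
  unfold bm choiceProb
  simp_rw [Finset.mul_sum]
  rw [Finset.sum_comm]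
  exact Finset.sum_congr rfl fun π' _ => bmInnerSum π' x A hx (ν π')

/-- If `π` is in the support of `ν`, then the path associated with `π` is supported on
the probability flow diagram of the induced system of choice probabilities. -/
theorem pathOf_supported_of_mem_support {α : Type*} [Fintype α] [DecidableEq α]
    (ν : RankOrd α → ℝ) (hν : IsDist ν) (π : RankOrd α) (hπ : 0 < ν π) :
    SupportedPath (choiceProb ν) (pathOf π) := by
  set n := Fintype.card α with hn
  have hmem : ∀ i < n, ∀ w : α, w ∈ pathOf π i \ pathOf π (i+1) ↔ (π w : ℕ) = n - i - 1 := by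
    intro i hi w
    simp only [pathOf, mem_sdiff, mem_filter, mem_univ, true_and, ← hn]
    omega
  constructor
  · refine ⟨?_, ?_, ?_⟩
    · ext w
      simp only [pathOf, mem_filter, mem_univ, true_and, Nat.sub_zero, ← hn]
      exact iff_of_true (π w).isLt trivial
    · ext w
      simp [pathOf, ← hn]
    · intro i hi
      constructor
      · intro w hw
        simp only [pathOf, mem_filter, mem_univ, true_and] at hw ⊢
        omega
      · have hlt : n - i - 1 < n := by omega
        have : pathOf π i \ pathOf π (i+1) = {π.symm ⟨n - i - 1, hlt⟩} := by
          ext w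
          rw [hmem i hi w, Finset.mem_singleton]
          constructor
          · intro h
            have : π w = ⟨n - i - 1, hlt⟩ := Fin.ext h
            rw [← this, Equiv.symm_apply_apply]
          · intro h
            rw [h, Equiv.apply_symm_apply]
        rw [this, Finset.card_singleton]
  · intro i hi x hx
    have hxv : (π x : ℕ) = n - i - 1 := (hmem i hi x).mp hx
    have hxA : x ∈ pathOf π i := (Finset.mem_sdiff.mp hx).1
    rw [bm_eq ν x (pathOf π i) hxA]
    apply Finset.sum_pos'
    · intro π' _
      by_cases h : inM π' x (pathOf π i) <;> simp [h, hν.1 π']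
    · refine ⟨π, Finset.mem_univ π, ?_⟩
      have hinM : inM π x (pathOf π i) := by
        constructor
        · intro z hz
          simp only [pathOf, mem_filter, mem_univ, true_and, not_lt, ← hn] at hz
          omega
        · intro y hy hyx
          simp only [pathOf, mem_filter, mem_univ, true_and, ← hn] at hy
          have : (π y : ℕ) ≠ (π x : ℕ) := fun h => hyx (π.injective (Fin.ext h))
          omega
      simp [hinM, hπ]
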